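/- Let f : X → Y and f' : X' → Y' be continuous maps between Hausdorff, second-countable, locally compact topological spaces. Then L(f × f') = ( L(f) × cl(f'(X')) ) ∪ ( cl(f(X)) × L(f') ), where f × f' : X × X' → Y × Y' is the product map and cl denotes closure. -/

import Mathlib

open Filter Topology Set

/-- The limit set `L(f)` of a map `f : X → Y`: the set of `y ∈ Y` for which there is a
sequence in `X` with no cluster points in `X` whose image under `f` converges to `y`. -/
def limitSet {X Y : Type*} [TopologicalSpace X] [TopologicalSpace Y] (f : X → Y) : Set Y :=
  {y | ∃ u : ℕ → X, (∀ p : X, ¬ MapClusterPt p Filter.atTop u) ∧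
    Filter.Tendsto (fun n => f (u n)) Filter.atTop (nhds y)}

theorem limitSet_aux {X X' : Type*} [TopologicalSpace X] [FirstCountableTopology X]
    [TopologicalSpace X'] [FirstCountableTopology X']
    (u : ℕ → X × X') (hu : ∀ p : X × X', ¬ MapClusterPt p Filter.atTop u)
    (p : X) (hp : MapClusterPt p Filter.atTop (fun n => (u n).1)) :
    ∃ φ : ℕ → ℕ, StrictMono φ ∧
      ∀ q : X', ¬ MapClusterPt q Filter.atTop (fun n => (u (φ n)).2) := by
  obtain ⟨φ, hφ, hconv⟩ := TopologicalSpace.FirstCountableTopology.tendsto_subseq hp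
  refine ⟨φ, hφ, fun q hq => ?_⟩
  obtain ⟨ψ, hψ, hconv'⟩ := TopologicalSpace.FirstCountableTopology.tendsto_subseq hq
  apply hu (p, q)
  have h1 : Tendsto (fun n => (u (φ (ψ n))).1) atTop (𝓝 p) :=
    hconv.comp hψ.tendsto_atTop
  have h3 : Tendsto (u ∘ (φ ∘ ψ)) atTop (𝓝 (p, q)) := by
    rw [nhds_prod_eq]
    exact (h1.prodMk hconv').congr (fun n => rfl)
  exact MapClusterPt.of_comp ((hφ.comp hψ).tendsto_atTop) h3.mapClusterPt

/-- No cluster point of a pair sequence projects onto the first coordinate. -/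
theorem limitSet_fst {X X' : Type*} [TopologicalSpace X] [TopologicalSpace X']
    (u : ℕ → X) (v : ℕ → X') (hu : ∀ p : X, ¬ MapClusterPt p Filter.atTop u) :
    ∀ p : X × X', ¬ MapClusterPt p Filter.atTop (fun n => (u n, v n)) := by
  intro p hp
  apply hu p.1
  have := hp.clusterPt.map (continuousAt_fst (p := p)) tendsto_map
  rwa [Filter.map_map] at this

/-- `L(f × f') = L(f) × cl(f'(X')) ∪ cl(f(X)) × L(f')`. -/
theorem limitSet_prod_map
    {X Y X' Y' : Type*}
    [TopologicalSpace X] [T2Space X] [SecondCountableTopology X] [LocallyCompactSpace X]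
    [TopologicalSpace Y] [T2Space Y] [SecondCountableTopology Y] [LocallyCompactSpace Y]
    [TopologicalSpace X'] [T2Space X'] [SecondCountableTopology X'] [LocallyCompactSpace X']
    [TopologicalSpace Y'] [T2Space Y'] [SecondCountableTopology Y'] [LocallyCompactSpace Y']
    (f : X → Y) (hf : Continuous f) (f' : X' → Y') (hf' : Continuous f') :
    limitSet (Prod.map f f') =
      (limitSet f) ×ˢ closure (Set.range f') ∪ closure (Set.range f) ×ˢ (limitSet f') := by
  ext ⟨y, y'⟩
  constructor
  · rintro ⟨u, hu, htend⟩
    have hfa : Tendsto (fun n => f (u n).1) atTop (𝓝 y) :=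
      (continuous_fst.tendsto _).comp htend
    have hfb : Tendsto (fun n => f' (u n).2) atTop (𝓝 y') :=
      (continuous_snd.tendsto _).comp htend
    have hycl : y ∈ closure (Set.range f) :=
      mem_closure_of_tendsto hfa (Eventually.of_forall fun n => mem_range_self _)
    have hycl' : y' ∈ closure (Set.range f') :=
      mem_closure_of_tendsto hfb (Eventually.of_forall fun n => mem_range_self _)
    by_cases h : ∃ p : X, MapClusterPt p Filter.atTop (fun n => (u n).1)
    · obtain ⟨p, hp⟩ := h
      obtain ⟨φ, hφ, hnc⟩ := limitSet_aux u hu p hp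
      exact Or.inr ⟨hycl, ⟨fun n => (u (φ n)).2, hnc, hfb.comp hφ.tendsto_atTop⟩⟩
    · push_neg at h
      exact Or.inl ⟨⟨fun n => (u n).1, h, hfa⟩, hycl'⟩
  · rintro (⟨⟨u, hu, hfu⟩, hy'⟩ | ⟨hy, ⟨v, hv, hfv⟩⟩)
    · obtain ⟨w, hw, hwlim⟩ := mem_closure_iff_seq_limit.1 hy'
      choose v hv using hw
      refine ⟨fun n => (u n, v n), limitSet_fst u v hu, ?_⟩
      have : Tendsto (fun n => (f (u n), f' (v n))) atTop (𝓝 (y, y')) := by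
        rw [nhds_prod_eq]
        exact hfu.prodMk (by simpa [hv] using hwlim)
      exact this
    · obtain ⟨w, hw, hwlim⟩ := mem_closure_iff_seq_limit.1 hy
      choose u hu using hw
      have hnc : ∀ p : X × X', ¬ MapClusterPt p Filter.atTop (fun n => (u n, v n)) := by
        intro p hp
        apply hv p.2
        have := hp.clusterPt.map (continuousAt_snd (p := p)) tendsto_map
        rwa [Filter.map_map] at this
      refine ⟨fun n => (u n, v n), hnc, ?_⟩
      have : Tendsto (fun n => (f (u n), f' (v n))) atTop (𝓝 (y, y')) := by
        rw [nhds_prod_eq]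
        exact (by simpa [hu] using hwlim : Tendsto (fun n => f (u n)) atTop (𝓝 y)).prodMk hfv
      exact this
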